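/- Let n ≥ 2k and m = ⌊n/2⌋ − 2k + 1. Given any coloring c of the stable k-subsets of [n] with colors in [m], extend it to a coloring c' of all k-subsets of [n] with colors in [n-2k+1] by: if A is unstable with smallest odd element 2i−1, set c'(A) = i; if A is stable, set c'(A) = c(A) + ⌈n/2⌉. Then c'(A) = c'(B) and A ∩ B = ∅ imply that A and B are both stable and c(A) = c(B). -/
import Mathlib


/-- A subset `S` of `[n] = {1,...,n}` is stable if it contains no two cyclically
consecutive elements. -/
def IsStable (n : ℕ) (S : Finset ℕ) : Prop :=
  (∀ i ∈ Finset.Icc 1 n, ¬(i ∈ S ∧ i + 1 ∈ S)) ∧ ¬(n ∈ S ∧ 1 ∈ S)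

lemma unstable_sInf (n : ℕ) (A : Finset ℕ) (h : ¬ IsStable n A) :
    sInf {x | x ∈ A ∧ Odd x} ∈ A ∧ Odd (sInf {x | x ∈ A ∧ Odd x}) := by
  have hne : {x | x ∈ A ∧ Odd x}.Nonempty := by
    rw [IsStable] at h
    push_neg at h
    by_cases hcase : ∃ i ∈ Finset.Icc 1 n, i ∈ A ∧ i + 1 ∈ A
    · obtain ⟨i, _, hiA, hi1A⟩ := hcase
      rcases Nat.even_or_odd i with he | ho
      · exact ⟨i + 1, hi1A, he.add_one⟩
      · exact ⟨i, hiA, ho⟩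
    · have h1 : n ∈ A ∧ 1 ∈ A := h (fun i hi hiA hi1 => hcase ⟨i, hi, hiA, hi1⟩)
      exact ⟨1, h1.2, odd_one⟩
  exact Nat.sInf_mem hne

/-- Let `m = ⌊n/2⌋ − 2k + 1` and let `c` color the stable `k`-subsets of `[n]` with
colors in `[m]`. Extend `c` to `c'` on all `k`-subsets by: if `A` is unstable with
smallest odd element `2i−1`, set `c'(A) = i`; if `A` is stable, `c'(A) = c(A) + ⌈n/2⌉`.
Then `c'(A) = c'(B)` and `A ∩ B = ∅` imply that `A, B` are stable and `c(A) = c(B)`. -/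
theorem stmt16 (n k m : ℕ) (hn : 2 * k ≤ n) (hm : m = n / 2 - 2 * k + 1)
    (c : Finset ℕ → ℕ)
    (hc : ∀ A : Finset ℕ, A ⊆ Finset.Icc 1 n → A.card = k → IsStable n A →
      c A ∈ Finset.Icc 1 m)
    (c' : Finset ℕ → ℕ)
    (hc'stable : ∀ A : Finset ℕ, IsStable n A → c' A = c A + (n + 1) / 2)
    (hc'unstable : ∀ A : Finset ℕ, ¬ IsStable n A →
      c' A = (sInf {x | x ∈ A ∧ Odd x} + 1) / 2) :
    ∀ A B : Finset ℕ, A ⊆ Finset.Icc 1 n → A.card = k →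
      B ⊆ Finset.Icc 1 n → B.card = k →
      c' A = c' B → Disjoint A B →
      IsStable n A ∧ IsStable n B ∧ c A = c B := by
  intro A B hAsub hAcard hBsub hBcard hcc hdisj
  by_cases hA : IsStable n A <;> by_cases hB : IsStable n B
  · -- both stable
    refine ⟨hA, hB, ?_⟩
    rw [hc'stable A hA, hc'stable B hB] at hcc
    omega
  · -- A stable, B unstable: contradiction
    exfalso
    obtain ⟨hyB, hyodd⟩ := unstable_sInf n B hB
    have hyn : sInf {x | x ∈ B ∧ Odd x} ≤ n := (Finset.mem_Icc.mp (hBsub hyB)).2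
    have hcA : 1 ≤ c A := (Finset.mem_Icc.mp (hc A hAsub hAcard hA)).1
    rw [hc'stable A hA, hc'unstable B hB] at hcc
    omega
  · -- A unstable, B stable: contradiction
    exfalso
    obtain ⟨hyA, hyodd⟩ := unstable_sInf n A hA
    have hyn : sInf {x | x ∈ A ∧ Odd x} ≤ n := (Finset.mem_Icc.mp (hAsub hyA)).2
    have hcB : 1 ≤ c B := (Finset.mem_Icc.mp (hc B hBsub hBcard hB)).1
    rw [hc'stable B hB, hc'unstable A hA] at hcc
    omega
  · -- both unstable: same smallest odd element contradicts disjointness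
    exfalso
    obtain ⟨hxA, hxodd⟩ := unstable_sInf n A hA
    obtain ⟨hyB, hyodd⟩ := unstable_sInf n B hB
    rw [hc'unstable A hA, hc'unstable B hB] at hcc
    obtain ⟨a, ha⟩ := hxodd
    obtain ⟨b, hb⟩ := hyodd
    have : sInf {x | x ∈ A ∧ Odd x} = sInf {x | x ∈ B ∧ Odd x} := by omega
    rw [this] at hxA
    exact Finset.disjoint_left.mp hdisj hxA hyB
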